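/- arXiv:2106.12931 — 3 statements merged into one kernel-verified Lean document; each statement's English description precedes it below -/
import Mathlib

section
/- Let H_0 ∈ ℝ^{N×T×F} be a third-order tensor and B1 ∈ ℝ^{N×N}, B2 ∈ ℝ^{T×T}, B3 ∈ ℝ^{F×F} square matrices. Suppose H : ℝ → ℝ^{N×T×F} is differentiable and satisfies dH(t)/dt = H(t) ×_1 B1 + H(t) ×_2 B2 + H(t) ×_3 B3 + H_0 for all t. Then the integrating-factor transform H*(t) = H(t) ×_1 exp(−tB1) ×_2 exp(−tB2) ×_3 exp(−tB3) is differentiable with derivative dH*(t)/dt = H_0 ×_1 exp(−tB1) ×_2 exp(−tB2) ×_3 exp(−tB3). -/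
open scoped BigOperators
open Matrix

noncomputable section

/-- Mode-1 product of a third-order tensor with a matrix. -/
def tmul1 {n1 n2 n3 m : ℕ} (T : Fin n1 → Fin n2 → Fin n3 → ℝ)
    (M : Matrix (Fin n1) (Fin m) ℝ) : Fin m → Fin n2 → Fin n3 → ℝ :=
  fun l j k => ∑ i, T i j k * M i l

/-- Mode-2 product of a third-order tensor with a matrix. -/
def tmul2 {n1 n2 n3 m : ℕ} (T : Fin n1 → Fin n2 → Fin n3 → ℝ)
    (M : Matrix (Fin n2) (Fin m) ℝ) : Fin n1 → Fin m → Fin n3 → ℝ :=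
  fun i l k => ∑ j, T i j k * M j l

/-- Mode-3 product of a third-order tensor with a matrix. -/
def tmul3 {n1 n2 n3 m : ℕ} (T : Fin n1 → Fin n2 → Fin n3 → ℝ)
    (M : Matrix (Fin n3) (Fin m) ℝ) : Fin n1 → Fin n2 → Fin m → ℝ :=
  fun i j l => ∑ k, T i j k * M k l

lemma exp_comm' {n : ℕ} (B : Matrix (Fin n) (Fin n) ℝ) (t : ℝ) :
    B * NormedSpace.exp (-t • B) = NormedSpace.exp (-t • B) * B :=
  ((Commute.refl B).smul_right (-t : ℝ)).exp_right

lemma exp_entry_hasDerivAt' {n : ℕ} (B : Matrix (Fin n) (Fin n) ℝ) (t : ℝ) (i j : Fin n) :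
    HasDerivAt (fun s : ℝ => NormedSpace.exp (-s • B) i j)
      ((-(NormedSpace.exp (-t • B) * B)) i j) t := by
  letI : SeminormedRing (Matrix (Fin n) (Fin n) ℝ) := Matrix.linftyOpSemiNormedRing
  letI : NormedRing (Matrix (Fin n) (Fin n) ℝ) := Matrix.linftyOpNormedRing
  letI : NormedAlgebra ℝ (Matrix (Fin n) (Fin n) ℝ) := Matrix.linftyOpNormedAlgebra
  have h : HasDerivAt (fun s : ℝ => NormedSpace.exp (s • (-B)))
      (NormedSpace.exp (t • (-B)) * (-B)) t := hasDerivAt_exp_smul_const (-B) t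
  have h2 := ((Matrix.entryLinearMap ℝ ℝ i j).toContinuousLinearMap).hasFDerivAt.comp_hasDerivAt
    t h
  simp only [smul_neg, ← neg_smul, Function.comp_def, LinearMap.coe_toContinuousLinearMap',
    Matrix.entryLinearMap_apply, mul_neg] at h2
  exact h2

lemma cancel_sum {n : ℕ} (B E : Matrix (Fin n) (Fin n) ℝ) (hc : B * E = E * B)
    (v : Fin n → ℝ) (a : Fin n) :
    (∑ i, (∑ l, v l * B l i) * E i a) = ∑ i, v i * (E * B) i a := by
  rw [← hc]
  simp only [Matrix.mul_apply, Finset.sum_mul, Finset.mul_sum]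
  rw [Finset.sum_comm]
  exact Finset.sum_congr rfl fun l _ => Finset.sum_congr rfl fun i _ => by ring

/-- If `H` solves the tensor ODE `H' = H ×₁ B₁ + H ×₂ B₂ + H ×₃ B₃ + H₀`, then the
integrating-factor transform `H*(t) = H(t) ×₁ exp(−tB₁) ×₂ exp(−tB₂) ×₃ exp(−tB₃)`
has derivative `H₀ ×₁ exp(−tB₁) ×₂ exp(−tB₂) ×₃ exp(−tB₃)`. -/
theorem integrating_factor_derivative {N T F : ℕ}
    (H0 : Fin N → Fin T → Fin F → ℝ)
    (B1 : Matrix (Fin N) (Fin N) ℝ) (B2 : Matrix (Fin T) (Fin T) ℝ)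
    (B3 : Matrix (Fin F) (Fin F) ℝ)
    (H : ℝ → (Fin N → Fin T → Fin F → ℝ))
    (hODE : ∀ t : ℝ, HasDerivAt H
      (tmul1 (H t) B1 + tmul2 (H t) B2 + tmul3 (H t) B3 + H0) t) :
    ∀ t : ℝ, HasDerivAt
      (fun s : ℝ => tmul3 (tmul2 (tmul1 (H s) (NormedSpace.exp (-s • B1)))
        (NormedSpace.exp (-s • B2))) (NormedSpace.exp (-s • B3)))
      (tmul3 (tmul2 (tmul1 H0 (NormedSpace.exp (-t • B1)))
        (NormedSpace.exp (-t • B2))) (NormedSpace.exp (-t • B3))) t := by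
  intro t
  have hH : ∀ i j k, HasDerivAt (fun s => H s i j k)
      ((tmul1 (H t) B1 + tmul2 (H t) B2 + tmul3 (H t) B3 + H0) i j k) t := by
    intro i j k
    exact hasDerivAt_pi.mp (hasDerivAt_pi.mp (hasDerivAt_pi.mp (hODE t) i) j) k
  rw [hasDerivAt_pi]; intro a
  rw [hasDerivAt_pi]; intro b
  rw [hasDerivAt_pi]; intro c
  simp only [tmul1, tmul2, tmul3]
  have hP := fun i => exp_entry_hasDerivAt' B1 t i a
  have hQ := fun j => exp_entry_hasDerivAt' B2 t j b
  have hR := fun k => exp_entry_hasDerivAt' B3 t k c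
  have hw := HasDerivAt.sum (fun k (_ : k ∈ (Finset.univ : Finset (Fin F))) =>
    (HasDerivAt.sum (fun j (_ : j ∈ (Finset.univ : Finset (Fin T))) =>
      (HasDerivAt.sum (fun i (_ : i ∈ (Finset.univ : Finset (Fin N))) =>
        (hH i j k).mul (hP i))).mul (hQ j))).mul (hR k))
  convert hw using 1
  · funext s
    simp only [Finset.sum_apply, Pi.mul_apply]
  simp only [Finset.sum_apply, Pi.mul_apply]
  symm
  set P := NormedSpace.exp (-t • B1) with hPdef
  set Q := NormedSpace.exp (-t • B2) with hQdef
  set R := NormedSpace.exp (-t • B3) with hRdef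
  -- abbreviations (plain defs to keep terms readable)
  -- Step A: innermost cancellation (mode 1)
  have stepA : ∀ (j : Fin T) (k : Fin F),
      (∑ i, ((tmul1 (H t) B1 + tmul2 (H t) B2 + tmul3 (H t) B3 + H0) i j k * P i a
        + H t i j k * (-(P * B1)) i a))
      = (∑ i, (∑ l, H t i l k * B2 l j) * P i a)
        + (∑ i, (∑ l, H t i j l * B3 l k) * P i a)
        + (∑ i, H0 i j k * P i a) := by
    intro j k
    have expand : ∀ i : Fin N,
        (tmul1 (H t) B1 + tmul2 (H t) B2 + tmul3 (H t) B3 + H0) i j k * P i a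
          + H t i j k * (-(P * B1)) i a
        = ((∑ l, H t l j k * B1 l i) * P i a + H t i j k * (-(P * B1)) i a)
          + ((∑ l, H t i l k * B2 l j) * P i a
            + ((∑ l, H t i j l * B3 l k) * P i a + H0 i j k * P i a)) := by
      intro i
      simp only [Pi.add_apply, tmul1, tmul2, tmul3]
      ring
    rw [Finset.sum_congr rfl (fun i _ => expand i), Finset.sum_add_distrib]
    have hzero : (∑ i, ((∑ l, H t l j k * B1 l i) * P i a + H t i j k * (-(P * B1)) i a)) = 0 := by
      rw [Finset.sum_add_distrib, cancel_sum B1 P (exp_comm' B1 t) (fun l => H t l j k) a,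
        ← Finset.sum_add_distrib]
      refine Finset.sum_eq_zero fun i _ => ?_
      simp [Matrix.neg_apply]
    rw [hzero, zero_add, Finset.sum_add_distrib, Finset.sum_add_distrib, add_assoc]
  -- swap lemma (pull a matrix factor out of an inner sum)
  have stepB : ∀ k : Fin F,
      (∑ j, ((∑ i, (∑ l, H t i l k * B2 l j) * P i a) * Q j b
        + (∑ i, H t i j k * P i a) * (-(Q * B2)) j b)) = 0 := by
    intro k
    have swap : ∀ j : Fin T, (∑ i, (∑ l, H t i l k * B2 l j) * P i a)
        = ∑ l, (∑ i, H t i l k * P i a) * B2 l j := by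
      intro j
      simp only [Finset.sum_mul]
      rw [Finset.sum_comm]
      exact Finset.sum_congr rfl fun l _ => Finset.sum_congr rfl fun i _ => by ring
    calc (∑ j, ((∑ i, (∑ l, H t i l k * B2 l j) * P i a) * Q j b
            + (∑ i, H t i j k * P i a) * (-(Q * B2)) j b))
        = (∑ j, (∑ l, (fun l => ∑ i, H t i l k * P i a) l * B2 l j) * Q j b)
            + ∑ j, (fun l => ∑ i, H t i l k * P i a) j * (-(Q * B2)) j b := by
          rw [← Finset.sum_add_distrib]
          exact Finset.sum_congr rfl fun j _ => by rw [swap j]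
      _ = (∑ j, (fun l => ∑ i, H t i l k * P i a) j * (Q * B2) j b)
            + ∑ j, (fun l => ∑ i, H t i l k * P i a) j * (-(Q * B2)) j b := by
          rw [cancel_sum B2 Q (exp_comm' B2 t) (fun l => ∑ i, H t i l k * P i a) b]
      _ = 0 := by
          rw [← Finset.sum_add_distrib]
          refine Finset.sum_eq_zero fun j _ => ?_
          simp [Matrix.neg_apply]
  have stepC :
      (∑ k, (∑ j, (∑ i, (∑ l, H t i j l * B3 l k) * P i a) * Q j b) * R k c
        + ∑ k, (∑ j, (∑ i, H t i j k * P i a) * Q j b) * (-(R * B3)) k c) = 0 := by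
    have swap3 : ∀ k : Fin F, (∑ j, (∑ i, (∑ l, H t i j l * B3 l k) * P i a) * Q j b)
        = ∑ l, (∑ j, (∑ i, H t i j l * P i a) * Q j b) * B3 l k := by
      intro k
      have inner : ∀ j : Fin T, (∑ i, (∑ l, H t i j l * B3 l k) * P i a)
          = ∑ l, (∑ i, H t i j l * P i a) * B3 l k := by
        intro j
        simp only [Finset.sum_mul]
        rw [Finset.sum_comm]
        exact Finset.sum_congr rfl fun l _ => Finset.sum_congr rfl fun i _ => by ring
      calc (∑ j, (∑ i, (∑ l, H t i j l * B3 l k) * P i a) * Q j b)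
          = ∑ j, (∑ l, (∑ i, H t i j l * P i a) * B3 l k) * Q j b :=
            Finset.sum_congr rfl fun j _ => by rw [inner j]
        _ = ∑ j, ∑ l, (∑ i, H t i j l * P i a) * B3 l k * Q j b := by
            simp only [Finset.sum_mul]
        _ = ∑ l, ∑ j, (∑ i, H t i j l * P i a) * B3 l k * Q j b := Finset.sum_comm
        _ = ∑ l, (∑ j, (∑ i, H t i j l * P i a) * Q j b) * B3 l k := by
            refine Finset.sum_congr rfl fun l _ => ?_
            rw [Finset.sum_mul]
            exact Finset.sum_congr rfl fun j _ => by ring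
    calc (∑ k, (∑ j, (∑ i, (∑ l, H t i j l * B3 l k) * P i a) * Q j b) * R k c
          + ∑ k, (∑ j, (∑ i, H t i j k * P i a) * Q j b) * (-(R * B3)) k c)
        = (∑ k, (∑ l, (fun l => ∑ j, (∑ i, H t i j l * P i a) * Q j b) l * B3 l k) * R k c)
          + ∑ k, (fun l => ∑ j, (∑ i, H t i j l * P i a) * Q j b) k * (-(R * B3)) k c := by
          rw [Finset.sum_congr rfl (fun k _ => by rw [swap3 k])]
      _ = (∑ k, (fun l => ∑ j, (∑ i, H t i j l * P i a) * Q j b) k * (R * B3) k c)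
          + ∑ k, (fun l => ∑ j, (∑ i, H t i j l * P i a) * Q j b) k * (-(R * B3)) k c := by
          rw [cancel_sum B3 R (exp_comm' B3 t)
            (fun l => ∑ j, (∑ i, H t i j l * P i a) * Q j b) c]
      _ = 0 := by
          rw [← Finset.sum_add_distrib]
          refine Finset.sum_eq_zero fun k _ => ?_
          simp [Matrix.neg_apply]
  -- assemble
  have hM : ∀ k : Fin F,
      (∑ j, ((∑ i, ((tmul1 (H t) B1 + tmul2 (H t) B2 + tmul3 (H t) B3 + H0) i j k * P i a
          + H t i j k * (-(P * B1)) i a)) * Q j b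
        + (∑ i, H t i j k * P i a) * (-(Q * B2)) j b))
      = (∑ j, (∑ i, (∑ l, H t i j l * B3 l k) * P i a) * Q j b)
        + (∑ j, (∑ i, H0 i j k * P i a) * Q j b) := by
    intro k
    calc (∑ j, ((∑ i, ((tmul1 (H t) B1 + tmul2 (H t) B2 + tmul3 (H t) B3 + H0) i j k * P i a
            + H t i j k * (-(P * B1)) i a)) * Q j b
          + (∑ i, H t i j k * P i a) * (-(Q * B2)) j b))
        = ∑ j, (((∑ i, (∑ l, H t i l k * B2 l j) * P i a) * Q j b
              + (∑ i, H t i j k * P i a) * (-(Q * B2)) j b)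
            + ((∑ i, (∑ l, H t i j l * B3 l k) * P i a) * Q j b
              + (∑ i, H0 i j k * P i a) * Q j b)) := by
          refine Finset.sum_congr rfl fun j _ => ?_
          rw [stepA j k]
          ring
      _ = (∑ j, ((∑ i, (∑ l, H t i l k * B2 l j) * P i a) * Q j b
              + (∑ i, H t i j k * P i a) * (-(Q * B2)) j b))
          + ∑ j, ((∑ i, (∑ l, H t i j l * B3 l k) * P i a) * Q j b
              + (∑ i, H0 i j k * P i a) * Q j b) := Finset.sum_add_distrib
      _ = (∑ j, (∑ i, (∑ l, H t i j l * B3 l k) * P i a) * Q j b)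
          + (∑ j, (∑ i, H0 i j k * P i a) * Q j b) := by
          rw [stepB k, zero_add, Finset.sum_add_distrib]
  calc (∑ k, ((∑ j, ((∑ i, ((tmul1 (H t) B1 + tmul2 (H t) B2 + tmul3 (H t) B3 + H0) i j k * P i a
            + H t i j k * (-(P * B1)) i a)) * Q j b
          + (∑ i, H t i j k * P i a) * (-(Q * B2)) j b)) * R k c
        + (∑ j, (∑ i, H t i j k * P i a) * Q j b) * (-(R * B3)) k c))
      = ∑ k, ((((∑ j, (∑ i, (∑ l, H t i j l * B3 l k) * P i a) * Q j b) * R k c)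
            + (∑ j, (∑ i, H t i j k * P i a) * Q j b) * (-(R * B3)) k c)
          + (∑ j, (∑ i, H0 i j k * P i a) * Q j b) * R k c) := by
        refine Finset.sum_congr rfl fun k _ => ?_
        rw [hM k]
        ring
    _ = ((∑ k, (∑ j, (∑ i, (∑ l, H t i j l * B3 l k) * P i a) * Q j b) * R k c
          + ∑ k, (∑ j, (∑ i, H t i j k * P i a) * Q j b) * (-(R * B3)) k c))
        + ∑ k, (∑ j, (∑ i, H0 i j k * P i a) * Q j b) * R k c := by
        rw [Finset.sum_add_distrib, Finset.sum_add_distrib]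
    _ = ∑ k, (∑ j, (∑ i, H0 i j k * P i a) * Q j b) * R k c := by
        rw [stepC, zero_add]
end
end

section
/- Let H_0 ∈ ℝ^{N×T×F} be a third-order tensor and B1 ∈ ℝ^{N×N}, B2 ∈ ℝ^{T×T}, B3 ∈ ℝ^{F×F} square matrices. Define H(t) = H_0 ×_1 exp(tB1) ×_2 exp(tB2) ×_3 exp(tB3) + ∫_0^t H_0 ×_1 exp((t−s)B1) ×_2 exp((t−s)B2) ×_3 exp((t−s)B3) ds. Then H(0) = H_0, H is differentiable, and H satisfies dH(t)/dt = H(t) ×_1 B1 + H(t) ×_2 B2 + H(t) ×_3 B3 + H_0 for all t ∈ ℝ. -/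
open scoped BigOperators
open Matrix intervalIntegral

noncomputable section

-- algebraic lemmas
lemma tmul1_tmul1 {n1 n2 n3 m p : ℕ} (T : Fin n1 → Fin n2 → Fin n3 → ℝ)
    (M : Matrix (Fin n1) (Fin m) ℝ) (M' : Matrix (Fin m) (Fin p) ℝ) :
    tmul1 (tmul1 T M) M' = tmul1 T (M * M') := by
  funext l j k
  simp only [tmul1, Matrix.mul_apply, Finset.sum_mul, Finset.mul_sum]
  rw [Finset.sum_comm]
  exact Finset.sum_congr rfl fun _ _ => Finset.sum_congr rfl fun _ _ => by ring

lemma tmul2_tmul2 {n1 n2 n3 m p : ℕ} (T : Fin n1 → Fin n2 → Fin n3 → ℝ)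
    (M : Matrix (Fin n2) (Fin m) ℝ) (M' : Matrix (Fin m) (Fin p) ℝ) :
    tmul2 (tmul2 T M) M' = tmul2 T (M * M') := by
  funext i l k
  simp only [tmul2, Matrix.mul_apply, Finset.sum_mul, Finset.mul_sum]
  rw [Finset.sum_comm]
  exact Finset.sum_congr rfl fun _ _ => Finset.sum_congr rfl fun _ _ => by ring

lemma tmul3_tmul3 {n1 n2 n3 m p : ℕ} (T : Fin n1 → Fin n2 → Fin n3 → ℝ)
    (M : Matrix (Fin n3) (Fin m) ℝ) (M' : Matrix (Fin m) (Fin p) ℝ) :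
    tmul3 (tmul3 T M) M' = tmul3 T (M * M') := by
  funext i j l
  simp only [tmul3, Matrix.mul_apply, Finset.sum_mul, Finset.mul_sum]
  rw [Finset.sum_comm]
  exact Finset.sum_congr rfl fun _ _ => Finset.sum_congr rfl fun _ _ => by ring

lemma tmul2_tmul1 {n1 n2 n3 m p : ℕ} (T : Fin n1 → Fin n2 → Fin n3 → ℝ)
    (M1 : Matrix (Fin n1) (Fin m) ℝ) (M2 : Matrix (Fin n2) (Fin p) ℝ) :
    tmul2 (tmul1 T M1) M2 = tmul1 (tmul2 T M2) M1 := by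
  funext i l k
  simp only [tmul1, tmul2, Finset.sum_mul]
  rw [Finset.sum_comm]
  exact Finset.sum_congr rfl fun _ _ => Finset.sum_congr rfl fun _ _ => by ring

lemma tmul3_tmul1 {n1 n2 n3 m p : ℕ} (T : Fin n1 → Fin n2 → Fin n3 → ℝ)
    (M1 : Matrix (Fin n1) (Fin m) ℝ) (M3 : Matrix (Fin n3) (Fin p) ℝ) :
    tmul3 (tmul1 T M1) M3 = tmul1 (tmul3 T M3) M1 := by
  funext i j l
  simp only [tmul1, tmul3, Finset.sum_mul]
  rw [Finset.sum_comm]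
  exact Finset.sum_congr rfl fun _ _ => Finset.sum_congr rfl fun _ _ => by ring

lemma tmul3_tmul2 {n1 n2 n3 m p : ℕ} (T : Fin n1 → Fin n2 → Fin n3 → ℝ)
    (M2 : Matrix (Fin n2) (Fin m) ℝ) (M3 : Matrix (Fin n3) (Fin p) ℝ) :
    tmul3 (tmul2 T M2) M3 = tmul2 (tmul3 T M3) M2 := by
  funext i j l
  simp only [tmul2, tmul3, Finset.sum_mul]
  rw [Finset.sum_comm]
  exact Finset.sum_congr rfl fun _ _ => Finset.sum_congr rfl fun _ _ => by ring

lemma tmul1_one {n1 n2 n3 : ℕ} (T : Fin n1 → Fin n2 → Fin n3 → ℝ) :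
    tmul1 T (1 : Matrix (Fin n1) (Fin n1) ℝ) = T := by
  funext l j k
  simp [tmul1, Matrix.one_apply]

lemma tmul2_one {n1 n2 n3 : ℕ} (T : Fin n1 → Fin n2 → Fin n3 → ℝ) :
    tmul2 T (1 : Matrix (Fin n2) (Fin n2) ℝ) = T := by
  funext i l k
  simp [tmul2, Matrix.one_apply]

lemma tmul3_one {n1 n2 n3 : ℕ} (T : Fin n1 → Fin n2 → Fin n3 → ℝ) :
    tmul3 T (1 : Matrix (Fin n3) (Fin n3) ℝ) = T := by
  funext i j l
  simp [tmul3, Matrix.one_apply]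

lemma tmul1_add {n1 n2 n3 m : ℕ} (X Y : Fin n1 → Fin n2 → Fin n3 → ℝ)
    (M : Matrix (Fin n1) (Fin m) ℝ) : tmul1 (X + Y) M = tmul1 X M + tmul1 Y M := by
  funext l j k
  simp [tmul1, add_mul, Finset.sum_add_distrib]

lemma tmul2_add {n1 n2 n3 m : ℕ} (X Y : Fin n1 → Fin n2 → Fin n3 → ℝ)
    (M : Matrix (Fin n2) (Fin m) ℝ) : tmul2 (X + Y) M = tmul2 X M + tmul2 Y M := by
  funext i l k
  simp [tmul2, add_mul, Finset.sum_add_distrib]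

lemma tmul3_add {n1 n2 n3 m : ℕ} (X Y : Fin n1 → Fin n2 → Fin n3 → ℝ)
    (M : Matrix (Fin n3) (Fin m) ℝ) : tmul3 (X + Y) M = tmul3 X M + tmul3 Y M := by
  funext i j l
  simp [tmul3, add_mul, Finset.sum_add_distrib]

section Exp
attribute [local instance] Matrix.linftyOpNormedRing Matrix.linftyOpNormedAlgebra

lemma hasDerivAt_exp_entry {n : ℕ} (B : Matrix (Fin n) (Fin n) ℝ) (a b : Fin n) (t : ℝ) :
    HasDerivAt (fun τ : ℝ => NormedSpace.exp (τ • B) a b)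
      ((NormedSpace.exp (t • B) * B) a b) t := by
  have h := hasDerivAt_exp_smul_const (𝕂 := ℝ) B t
  exact (Matrix.entryLinearMap ℝ ℝ a b).toContinuousLinearMap.hasFDerivAt.comp_hasDerivAt t h

end Exp

example {n : ℕ} (B : Matrix (Fin n) (Fin n) ℝ) : NormedSpace.exp ((0:ℝ) • B) = 1 := by
  simp [NormedSpace.exp_zero]

/-- `H₀ ×₁ exp(τB₁) ×₂ exp(τB₂) ×₃ exp(τB₃)`. -/
def expTensor {N T F : ℕ} (H0 : Fin N → Fin T → Fin F → ℝ)
    (B1 : Matrix (Fin N) (Fin N) ℝ) (B2 : Matrix (Fin T) (Fin T) ℝ)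
    (B3 : Matrix (Fin F) (Fin F) ℝ) (τ : ℝ) : Fin N → Fin T → Fin F → ℝ :=
  tmul3 (tmul2 (tmul1 H0 (NormedSpace.exp (τ • B1)))
    (NormedSpace.exp (τ • B2))) (NormedSpace.exp (τ • B3))

variable {N T F : ℕ} (H0 : Fin N → Fin T → Fin F → ℝ)
    (B1 : Matrix (Fin N) (Fin N) ℝ) (B2 : Matrix (Fin T) (Fin T) ℝ)
    (B3 : Matrix (Fin F) (Fin F) ℝ)

lemma tmul1_expTensor (t : ℝ) :
    tmul1 (expTensor H0 B1 B2 B3 t) B1 =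
      tmul3 (tmul2 (tmul1 H0 (NormedSpace.exp (t • B1) * B1))
        (NormedSpace.exp (t • B2))) (NormedSpace.exp (t • B3)) := by
  unfold expTensor
  rw [← tmul3_tmul1, ← tmul2_tmul1, tmul1_tmul1]

lemma tmul2_expTensor (t : ℝ) :
    tmul2 (expTensor H0 B1 B2 B3 t) B2 =
      tmul3 (tmul2 (tmul1 H0 (NormedSpace.exp (t • B1)))
        (NormedSpace.exp (t • B2) * B2)) (NormedSpace.exp (t • B3)) := by
  unfold expTensor
  rw [← tmul3_tmul2, tmul2_tmul2]

lemma tmul3_expTensor (t : ℝ) :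
    tmul3 (expTensor H0 B1 B2 B3 t) B3 =
      tmul3 (tmul2 (tmul1 H0 (NormedSpace.exp (t • B1)))
        (NormedSpace.exp (t • B2))) (NormedSpace.exp (t • B3) * B3) := by
  unfold expTensor
  rw [tmul3_tmul3]

lemma expTensor_hasDerivAt_comp (i : Fin N) (j : Fin T) (k : Fin F) (t : ℝ) :
    HasDerivAt (fun τ => expTensor H0 B1 B2 B3 τ i j k)
      ((tmul1 (expTensor H0 B1 B2 B3 t) B1 + tmul2 (expTensor H0 B1 B2 B3 t) B2 +
        tmul3 (expTensor H0 B1 B2 B3 t) B3) i j k) t := by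
  have h1 : ∀ a, HasDerivAt (fun τ : ℝ => NormedSpace.exp (τ • B1) a i)
      ((NormedSpace.exp (t • B1) * B1) a i) t := fun a => hasDerivAt_exp_entry B1 a i t
  have h2 : ∀ b, HasDerivAt (fun τ : ℝ => NormedSpace.exp (τ • B2) b j)
      ((NormedSpace.exp (t • B2) * B2) b j) t := fun b => hasDerivAt_exp_entry B2 b j t
  have h3 : ∀ c, HasDerivAt (fun τ : ℝ => NormedSpace.exp (τ • B3) c k)
      ((NormedSpace.exp (t • B3) * B3) c k) t := fun c => hasDerivAt_exp_entry B3 c k t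
  have hInner : ∀ b c, HasDerivAt
      (fun τ : ℝ => ∑ a, H0 a b c * NormedSpace.exp (τ • B1) a i)
      (∑ a, H0 a b c * (NormedSpace.exp (t • B1) * B1) a i) t :=
    fun b c => HasDerivAt.fun_sum fun a _ => (h1 a).const_mul _
  have hMid : ∀ c, HasDerivAt
      (fun τ : ℝ => ∑ b, (∑ a, H0 a b c * NormedSpace.exp (τ • B1) a i) *
        NormedSpace.exp (τ • B2) b j)
      (∑ b, ((∑ a, H0 a b c * (NormedSpace.exp (t • B1) * B1) a i) *
          NormedSpace.exp (t • B2) b j +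
        (∑ a, H0 a b c * NormedSpace.exp (t • B1) a i) *
          (NormedSpace.exp (t • B2) * B2) b j)) t :=
    fun c => HasDerivAt.fun_sum fun b _ => (hInner b c).mul (h2 b)
  have hOuter : HasDerivAt
      (fun τ : ℝ => ∑ c, (∑ b, (∑ a, H0 a b c * NormedSpace.exp (τ • B1) a i) *
        NormedSpace.exp (τ • B2) b j) * NormedSpace.exp (τ • B3) c k)
      (∑ c, ((∑ b, ((∑ a, H0 a b c * (NormedSpace.exp (t • B1) * B1) a i) *
          NormedSpace.exp (t • B2) b j +
        (∑ a, H0 a b c * NormedSpace.exp (t • B1) a i) *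
          (NormedSpace.exp (t • B2) * B2) b j)) * NormedSpace.exp (t • B3) c k +
        (∑ b, (∑ a, H0 a b c * NormedSpace.exp (t • B1) a i) *
          NormedSpace.exp (t • B2) b j) * (NormedSpace.exp (t • B3) * B3) c k)) t :=
    HasDerivAt.fun_sum fun c _ => (hMid c).mul (h3 c)
  have hfun : (fun τ => expTensor H0 B1 B2 B3 τ i j k) =
      fun τ : ℝ => ∑ c, (∑ b, (∑ a, H0 a b c * NormedSpace.exp (τ • B1) a i) *
        NormedSpace.exp (τ • B2) b j) * NormedSpace.exp (τ • B3) c k := rfl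
  rw [hfun]
  convert hOuter using 1
  rw [Pi.add_apply, Pi.add_apply, tmul1_expTensor, tmul2_expTensor, tmul3_expTensor]
  simp only [Pi.add_apply, tmul1, tmul2, tmul3, add_mul, Finset.sum_add_distrib]

lemma expTensor_continuous_comp (i : Fin N) (j : Fin T) (k : Fin F) :
    Continuous fun τ => expTensor H0 B1 B2 B3 τ i j k := by
  have : Differentiable ℝ fun τ => expTensor H0 B1 B2 B3 τ i j k :=
    fun t => (expTensor_hasDerivAt_comp H0 B1 B2 B3 i j k t).differentiableAt
  exact this.continuous

lemma cont1 (i : Fin N) (j : Fin T) (k : Fin F) :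
    Continuous fun s => tmul1 (expTensor H0 B1 B2 B3 s) B1 i j k := by
  simp only [tmul1]
  exact continuous_finset_sum _ fun a _ =>
    (expTensor_continuous_comp H0 B1 B2 B3 a j k).mul continuous_const

lemma cont2 (i : Fin N) (j : Fin T) (k : Fin F) :
    Continuous fun s => tmul2 (expTensor H0 B1 B2 B3 s) B2 i j k := by
  simp only [tmul2]
  exact continuous_finset_sum _ fun b _ =>
    (expTensor_continuous_comp H0 B1 B2 B3 i b k).mul continuous_const

lemma cont3 (i : Fin N) (j : Fin T) (k : Fin F) :
    Continuous fun s => tmul3 (expTensor H0 B1 B2 B3 s) B3 i j k := by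
  simp only [tmul3]
  exact continuous_finset_sum _ fun c _ =>
    (expTensor_continuous_comp H0 B1 B2 B3 i j c).mul continuous_const

lemma expTensor_zero : expTensor H0 B1 B2 B3 0 = H0 := by
  unfold expTensor
  simp [NormedSpace.exp_zero, tmul1_one, tmul2_one, tmul3_one]

lemma integral_L (t : ℝ) (i : Fin N) (j : Fin T) (k : Fin F) :
    tmul1 (fun i j k => ∫ s in (0:ℝ)..t, expTensor H0 B1 B2 B3 s i j k) B1 i j k +
      tmul2 (fun i j k => ∫ s in (0:ℝ)..t, expTensor H0 B1 B2 B3 s i j k) B2 i j k +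
      tmul3 (fun i j k => ∫ s in (0:ℝ)..t, expTensor H0 B1 B2 B3 s i j k) B3 i j k =
      expTensor H0 B1 B2 B3 t i j k - H0 i j k := by
  have hi1 : tmul1 (fun i j k => ∫ s in (0:ℝ)..t, expTensor H0 B1 B2 B3 s i j k) B1 i j k =
      ∫ s in (0:ℝ)..t, tmul1 (expTensor H0 B1 B2 B3 s) B1 i j k := by
    simp only [tmul1, ← intervalIntegral.integral_mul_const]
    exact (intervalIntegral.integral_finset_sum (μ := MeasureTheory.volume) fun a _ =>
      ((expTensor_continuous_comp H0 B1 B2 B3 a j k).mul continuous_const).intervalIntegrable 0 t).symm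
  have hi2 : tmul2 (fun i j k => ∫ s in (0:ℝ)..t, expTensor H0 B1 B2 B3 s i j k) B2 i j k =
      ∫ s in (0:ℝ)..t, tmul2 (expTensor H0 B1 B2 B3 s) B2 i j k := by
    simp only [tmul2, ← intervalIntegral.integral_mul_const]
    exact (intervalIntegral.integral_finset_sum (μ := MeasureTheory.volume) fun b _ =>
      ((expTensor_continuous_comp H0 B1 B2 B3 i b k).mul continuous_const).intervalIntegrable 0 t).symm
  have hi3 : tmul3 (fun i j k => ∫ s in (0:ℝ)..t, expTensor H0 B1 B2 B3 s i j k) B3 i j k =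
      ∫ s in (0:ℝ)..t, tmul3 (expTensor H0 B1 B2 B3 s) B3 i j k := by
    simp only [tmul3, ← intervalIntegral.integral_mul_const]
    exact (intervalIntegral.integral_finset_sum (μ := MeasureTheory.volume) fun c _ =>
      ((expTensor_continuous_comp H0 B1 B2 B3 i j c).mul continuous_const).intervalIntegrable 0 t).symm
  have hii1 : IntervalIntegrable (fun s => tmul1 (expTensor H0 B1 B2 B3 s) B1 i j k) MeasureTheory.volume 0 t := (cont1 H0 B1 B2 B3 i j k).intervalIntegrable 0 t
  have hii2 : IntervalIntegrable (fun s => tmul2 (expTensor H0 B1 B2 B3 s) B2 i j k) MeasureTheory.volume 0 t := (cont2 H0 B1 B2 B3 i j k).intervalIntegrable 0 t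
  have hii3 : IntervalIntegrable (fun s => tmul3 (expTensor H0 B1 B2 B3 s) B3 i j k) MeasureTheory.volume 0 t := (cont3 H0 B1 B2 B3 i j k).intervalIntegrable 0 t
  rw [hi1, hi2, hi3, ← intervalIntegral.integral_add hii1 hii2,
    ← intervalIntegral.integral_add (hii1.add hii2) hii3]
  have hftc := intervalIntegral.integral_eq_sub_of_hasDerivAt
    (f := fun u => expTensor H0 B1 B2 B3 u i j k)
    (f' := fun s => (tmul1 (expTensor H0 B1 B2 B3 s) B1 + tmul2 (expTensor H0 B1 B2 B3 s) B2 +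
      tmul3 (expTensor H0 B1 B2 B3 s) B3) i j k)
    (fun s _ => expTensor_hasDerivAt_comp H0 B1 B2 B3 i j k s)
    (by simpa only [Pi.add_apply] using (hii1.add hii2).add hii3)
  simp only [Pi.add_apply] at hftc
  rw [hftc, expTensor_zero]

/-- The analytic solution
`H(t) = H₀ ×₁ e^{tB₁} ×₂ e^{tB₂} ×₃ e^{tB₃}
  + ∫₀^t H₀ ×₁ e^{(t−s)B₁} ×₂ e^{(t−s)B₂} ×₃ e^{(t−s)B₃} ds` (entrywise). -/
def solTensor {N T F : ℕ} (H0 : Fin N → Fin T → Fin F → ℝ)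
    (B1 : Matrix (Fin N) (Fin N) ℝ) (B2 : Matrix (Fin T) (Fin T) ℝ)
    (B3 : Matrix (Fin F) (Fin F) ℝ) (t : ℝ) : Fin N → Fin T → Fin F → ℝ :=
  expTensor H0 B1 B2 B3 t +
    fun i j k => ∫ s in (0:ℝ)..t, expTensor H0 B1 B2 B3 (t - s) i j k

/-- The analytic solution satisfies `H(0) = H₀`, is differentiable, and solves
`dH/dt = H ×₁ B₁ + H ×₂ B₂ + H ×₃ B₃ + H₀`. -/
theorem solTensor_solves_graph_ode {N T F : ℕ}
    (H0 : Fin N → Fin T → Fin F → ℝ)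
    (B1 : Matrix (Fin N) (Fin N) ℝ) (B2 : Matrix (Fin T) (Fin T) ℝ)
    (B3 : Matrix (Fin F) (Fin F) ℝ) :
    solTensor H0 B1 B2 B3 0 = H0 ∧
      ∀ t : ℝ, HasDerivAt (solTensor H0 B1 B2 B3)
        (tmul1 (solTensor H0 B1 B2 B3 t) B1 + tmul2 (solTensor H0 B1 B2 B3 t) B2 +
          tmul3 (solTensor H0 B1 B2 B3 t) B3 + H0) t := by
  have hsol : solTensor H0 B1 B2 B3 = fun τ => expTensor H0 B1 B2 B3 τ +
      fun i j k => ∫ s in (0:ℝ)..τ, expTensor H0 B1 B2 B3 s i j k := by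
    funext τ
    unfold solTensor
    congr 1
    funext i j k
    rw [intervalIntegral.integral_comp_sub_left (fun s => expTensor H0 B1 B2 B3 s i j k) τ]
    simp
  constructor
  · rw [hsol]
    have hzero : (fun i j k => ∫ s in (0:ℝ)..(0:ℝ), expTensor H0 B1 B2 B3 s i j k) =
        (0 : Fin N → Fin T → Fin F → ℝ) := by
      funext i j k
      simp
    simp only [hzero, add_zero, expTensor_zero]
  · intro t
    rw [hsol]
    refine hasDerivAt_pi.2 fun i => hasDerivAt_pi.2 fun j => hasDerivAt_pi.2 fun k => ?_
    have hd := expTensor_hasDerivAt_comp H0 B1 B2 B3 i j k t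
    have hcont := expTensor_continuous_comp H0 B1 B2 B3 i j k
    have hint : HasDerivAt (fun τ => ∫ s in (0:ℝ)..τ, expTensor H0 B1 B2 B3 s i j k)
        (expTensor H0 B1 B2 B3 t i j k) t :=
      intervalIntegral.integral_hasDerivAt_right (hcont.intervalIntegrable 0 t)
        (hcont.stronglyMeasurableAtFilter _ _) hcont.continuousAt
    have hsum := hd.add hint
    simp only [Pi.add_apply] at hsum ⊢
    convert hsum using 1
    · rfl
    have hkey := integral_L H0 B1 B2 B3 t i j k
    simp only [tmul1_add, tmul2_add, tmul3_add, Pi.add_apply]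
    linarith [hkey]
end
end

section
/- Let H_0 ∈ ℝ^{N×T×F} be a third-order tensor and B1 ∈ ℝ^{N×N}, B2 ∈ ℝ^{T×T}, B3 ∈ ℝ^{F×F} square matrices. If H : ℝ → ℝ^{N×T×F} is differentiable, satisfies dH(t)/dt = H(t) ×_1 B1 + H(t) ×_2 B2 + H(t) ×_3 B3 + H_0 for all t, and H(0) = H_0, then for every t, H(t) = H_0 ×_1 exp(tB1) ×_2 exp(tB2) ×_3 exp(tB3) + ∫_0^t H_0 ×_1 exp((t−s)B1) ×_2 exp((t−s)B2) ×_3 exp((t−s)B3) ds. -/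
open scoped BigOperators
open Matrix intervalIntegral

noncomputable section

namespace GraphODEAux

variable {N T F : ℕ}

abbrev Ten (N T F : ℕ) := Fin N → Fin T → Fin F → ℝ

-- basic algebra lemmas
lemma tmul1_tmul1 (X : Ten N T F) (A B : Matrix (Fin N) (Fin N) ℝ) :
    tmul1 (tmul1 X A) B = tmul1 X (A * B) := by
  funext l j k
  simp only [tmul1, Matrix.mul_apply, Finset.sum_mul, Finset.mul_sum]
  rw [Finset.sum_comm]
  exact Finset.sum_congr rfl fun _ _ => Finset.sum_congr rfl fun _ _ => by ring

lemma tmul2_tmul2 (X : Ten N T F) (A B : Matrix (Fin T) (Fin T) ℝ) :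
    tmul2 (tmul2 X A) B = tmul2 X (A * B) := by
  funext i l k
  simp only [tmul2, Matrix.mul_apply, Finset.sum_mul, Finset.mul_sum]
  rw [Finset.sum_comm]
  exact Finset.sum_congr rfl fun _ _ => Finset.sum_congr rfl fun _ _ => by ring

lemma tmul3_tmul3 (X : Ten N T F) (A B : Matrix (Fin F) (Fin F) ℝ) :
    tmul3 (tmul3 X A) B = tmul3 X (A * B) := by
  funext i j l
  simp only [tmul3, Matrix.mul_apply, Finset.sum_mul, Finset.mul_sum]
  rw [Finset.sum_comm]
  exact Finset.sum_congr rfl fun _ _ => Finset.sum_congr rfl fun _ _ => by ring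

lemma tmul1_one (X : Ten N T F) : tmul1 X (1 : Matrix (Fin N) (Fin N) ℝ) = X := by
  funext l j k; simp [tmul1, Matrix.one_apply]

lemma tmul2_one (X : Ten N T F) : tmul2 X (1 : Matrix (Fin T) (Fin T) ℝ) = X := by
  funext i l k; simp [tmul2, Matrix.one_apply]

lemma tmul3_one (X : Ten N T F) : tmul3 X (1 : Matrix (Fin F) (Fin F) ℝ) = X := by
  funext i j l; simp [tmul3, Matrix.one_apply]

lemma tmul12_comm (X : Ten N T F) (A : Matrix (Fin N) (Fin N) ℝ)
    (B : Matrix (Fin T) (Fin T) ℝ) :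
    tmul2 (tmul1 X A) B = tmul1 (tmul2 X B) A := by
  funext i j k
  simp only [tmul1, tmul2, Finset.sum_mul]
  rw [Finset.sum_comm]
  exact Finset.sum_congr rfl fun _ _ => Finset.sum_congr rfl fun _ _ => by ring

lemma tmul13_comm (X : Ten N T F) (A : Matrix (Fin N) (Fin N) ℝ)
    (B : Matrix (Fin F) (Fin F) ℝ) :
    tmul3 (tmul1 X A) B = tmul1 (tmul3 X B) A := by
  funext i j k
  simp only [tmul1, tmul3, Finset.sum_mul]
  rw [Finset.sum_comm]
  exact Finset.sum_congr rfl fun _ _ => Finset.sum_congr rfl fun _ _ => by ring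

lemma tmul23_comm (X : Ten N T F) (A : Matrix (Fin T) (Fin T) ℝ)
    (B : Matrix (Fin F) (Fin F) ℝ) :
    tmul3 (tmul2 X A) B = tmul2 (tmul3 X B) A := by
  funext i j k
  simp only [tmul2, tmul3, Finset.sum_mul]
  rw [Finset.sum_comm]
  exact Finset.sum_congr rfl fun _ _ => Finset.sum_congr rfl fun _ _ => by ring

-- the mode multiplication operators as continuous linear maps
def mode1 (M : Matrix (Fin N) (Fin N) ℝ) : Ten N T F →L[ℝ] Ten N T F :=
  LinearMap.toContinuousLinearMap
    { toFun := fun X => tmul1 X M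
      map_add' := by
        intro X Y; funext l j k
        simp [tmul1, add_mul, Finset.sum_add_distrib]
      map_smul' := by
        intro c X; funext l j k
        simp [tmul1, Finset.mul_sum, mul_assoc] }

def mode2 (M : Matrix (Fin T) (Fin T) ℝ) : Ten N T F →L[ℝ] Ten N T F :=
  LinearMap.toContinuousLinearMap
    { toFun := fun X => tmul2 X M
      map_add' := by
        intro X Y; funext i l k
        simp [tmul2, add_mul, Finset.sum_add_distrib]
      map_smul' := by
        intro c X; funext i l k
        simp [tmul2, Finset.mul_sum, mul_assoc] }

def mode3 (M : Matrix (Fin F) (Fin F) ℝ) : Ten N T F →L[ℝ] Ten N T F :=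
  LinearMap.toContinuousLinearMap
    { toFun := fun X => tmul3 X M
      map_add' := by
        intro X Y; funext i j l
        simp [tmul3, add_mul, Finset.sum_add_distrib]
      map_smul' := by
        intro c X; funext i j l
        simp [tmul3, Finset.mul_sum, mul_assoc] }

@[simp] lemma mode1_apply (M : Matrix (Fin N) (Fin N) ℝ) (X : Ten N T F) :
    mode1 (N := N) (T := T) (F := F) M X = tmul1 X M := rfl
@[simp] lemma mode2_apply (M : Matrix (Fin T) (Fin T) ℝ) (X : Ten N T F) :
    mode2 (N := N) (T := T) (F := F) M X = tmul2 X M := rfl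
@[simp] lemma mode3_apply (M : Matrix (Fin F) (Fin F) ℝ) (X : Ten N T F) :
    mode3 (N := N) (T := T) (F := F) M X = tmul3 X M := rfl

end GraphODEAux

namespace GraphODEAux

open NormedSpace

variable {N T F : ℕ}

/-- Mode-1 multiplication as an algebra homomorphism (note the transpose). -/
def Phi1 (N T F : ℕ) : Matrix (Fin N) (Fin N) ℝ →ₐ[ℝ] (Ten N T F →L[ℝ] Ten N T F) where
  toFun M := mode1 Mᵀ
  map_one' := by
    ext X : 1
    simp [Matrix.transpose_one, tmul1_one, ContinuousLinearMap.one_apply]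
  map_mul' M₁ M₂ := by
    ext X : 1
    simp [ContinuousLinearMap.mul_apply, Matrix.transpose_mul, tmul1_tmul1]
  map_zero' := by
    ext X l j k
    simp [tmul1]
  map_add' M₁ M₂ := by
    ext X l j k
    simp [tmul1, mul_add, Finset.sum_add_distrib]
  commutes' r := by
    ext X l j k
    simp [Algebra.algebraMap_eq_smul_one, tmul1, Matrix.one_apply, mul_ite,
      Finset.mul_sum, ContinuousLinearMap.smul_apply, ContinuousLinearMap.one_apply,
      mul_comm]

def Phi2 (N T F : ℕ) : Matrix (Fin T) (Fin T) ℝ →ₐ[ℝ] (Ten N T F →L[ℝ] Ten N T F) where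
  toFun M := mode2 Mᵀ
  map_one' := by
    ext X : 1
    simp [Matrix.transpose_one, tmul2_one, ContinuousLinearMap.one_apply]
  map_mul' M₁ M₂ := by
    ext X : 1
    simp [ContinuousLinearMap.mul_apply, Matrix.transpose_mul, tmul2_tmul2]
  map_zero' := by
    ext X i l k
    simp [tmul2]
  map_add' M₁ M₂ := by
    ext X i l k
    simp [tmul2, mul_add, Finset.sum_add_distrib]
  commutes' r := by
    ext X i l k
    simp [Algebra.algebraMap_eq_smul_one, tmul2, Matrix.one_apply, mul_ite,
      Finset.mul_sum, ContinuousLinearMap.smul_apply, ContinuousLinearMap.one_apply,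
      mul_comm]

def Phi3 (N T F : ℕ) : Matrix (Fin F) (Fin F) ℝ →ₐ[ℝ] (Ten N T F →L[ℝ] Ten N T F) where
  toFun M := mode3 Mᵀ
  map_one' := by
    ext X : 1
    simp [Matrix.transpose_one, tmul3_one, ContinuousLinearMap.one_apply]
  map_mul' M₁ M₂ := by
    ext X : 1
    simp [ContinuousLinearMap.mul_apply, Matrix.transpose_mul, tmul3_tmul3]
  map_zero' := by
    ext X i j l
    simp [tmul3]
  map_add' M₁ M₂ := by
    ext X i j l
    simp [tmul3, mul_add, Finset.sum_add_distrib]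
  commutes' r := by
    ext X i j l
    simp [Algebra.algebraMap_eq_smul_one, tmul3, Matrix.one_apply, mul_ite,
      Finset.mul_sum, ContinuousLinearMap.smul_apply, ContinuousLinearMap.one_apply,
      mul_comm]

lemma continuous_Phi1 : Continuous (Phi1 N T F) :=
  (Phi1 N T F).toLinearMap.continuous_of_finiteDimensional

lemma continuous_Phi2 : Continuous (Phi2 N T F) :=
  (Phi2 N T F).toLinearMap.continuous_of_finiteDimensional

lemma continuous_Phi3 : Continuous (Phi3 N T F) :=
  (Phi3 N T F).toLinearMap.continuous_of_finiteDimensional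

lemma commute12 (A : Matrix (Fin N) (Fin N) ℝ) (B : Matrix (Fin T) (Fin T) ℝ) :
    Commute (Phi1 N T F A) (Phi2 N T F B) := by
  show _ = _
  ext X : 1
  simpa [Phi1, Phi2, ContinuousLinearMap.mul_apply] using (tmul12_comm X Aᵀ Bᵀ).symm

lemma commute13 (A : Matrix (Fin N) (Fin N) ℝ) (B : Matrix (Fin F) (Fin F) ℝ) :
    Commute (Phi1 N T F A) (Phi3 N T F B) := by
  show _ = _
  ext X : 1
  simpa [Phi1, Phi3, ContinuousLinearMap.mul_apply] using (tmul13_comm X Aᵀ Bᵀ).symm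

lemma commute23 (A : Matrix (Fin T) (Fin T) ℝ) (B : Matrix (Fin F) (Fin F) ℝ) :
    Commute (Phi2 N T F A) (Phi3 N T F B) := by
  show _ = _
  ext X : 1
  simpa [Phi2, Phi3, ContinuousLinearMap.mul_apply] using (tmul23_comm X Aᵀ Bᵀ).symm

end GraphODEAux

set_option synthInstance.maxHeartbeats 1000000
set_option maxHeartbeats 1000000
namespace GraphODEAux

open NormedSpace

variable {N T F : ℕ}

variable (B1 : Matrix (Fin N) (Fin N) ℝ) (B2 : Matrix (Fin T) (Fin T) ℝ)
  (B3 : Matrix (Fin F) (Fin F) ℝ)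

def Lop : Ten N T F →L[ℝ] Ten N T F :=
  Phi1 N T F B1ᵀ + Phi2 N T F B2ᵀ + Phi3 N T F B3ᵀ

lemma Lop_apply (X : Ten N T F) :
    Lop B1 B2 B3 X = tmul1 X B1 + tmul2 X B2 + tmul3 X B3 := by
  simp [Lop, Phi1, Phi2, Phi3, Matrix.transpose_transpose]

lemma exp_Phi1 (τ : ℝ) :
    exp (τ • Phi1 N T F B1ᵀ) = Phi1 N T F (exp (τ • B1ᵀ)) := by
  letI : SeminormedRing (Matrix (Fin N) (Fin N) ℝ) := Matrix.linftyOpSemiNormedRing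
  letI : NormedRing (Matrix (Fin N) (Fin N) ℝ) := Matrix.linftyOpNormedRing
  letI : NormedAlgebra ℝ (Matrix (Fin N) (Fin N) ℝ) := Matrix.linftyOpNormedAlgebra
  letI : NormedAlgebra ℚ (Matrix (Fin N) (Fin N) ℝ) := Matrix.linftyOpNormedAlgebra
  rw [← _root_.map_smul]; exact (map_exp (Phi1 N T F) continuous_Phi1 _).symm

lemma exp_Phi2 (τ : ℝ) :
    exp (τ • Phi2 N T F B2ᵀ) = Phi2 N T F (exp (τ • B2ᵀ)) := by
  letI : SeminormedRing (Matrix (Fin T) (Fin T) ℝ) := Matrix.linftyOpSemiNormedRing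
  letI : NormedRing (Matrix (Fin T) (Fin T) ℝ) := Matrix.linftyOpNormedRing
  letI : NormedAlgebra ℝ (Matrix (Fin T) (Fin T) ℝ) := Matrix.linftyOpNormedAlgebra
  letI : NormedAlgebra ℚ (Matrix (Fin T) (Fin T) ℝ) := Matrix.linftyOpNormedAlgebra
  rw [← _root_.map_smul]; exact (map_exp (Phi2 N T F) continuous_Phi2 _).symm

lemma exp_Phi3 (τ : ℝ) :
    exp (τ • Phi3 N T F B3ᵀ) = Phi3 N T F (exp (τ • B3ᵀ)) := by
  letI : SeminormedRing (Matrix (Fin F) (Fin F) ℝ) := Matrix.linftyOpSemiNormedRing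
  letI : NormedRing (Matrix (Fin F) (Fin F) ℝ) := Matrix.linftyOpNormedRing
  letI : NormedAlgebra ℝ (Matrix (Fin F) (Fin F) ℝ) := Matrix.linftyOpNormedAlgebra
  letI : NormedAlgebra ℚ (Matrix (Fin F) (Fin F) ℝ) := Matrix.linftyOpNormedAlgebra
  rw [← _root_.map_smul]; exact (map_exp (Phi3 N T F) continuous_Phi3 _).symm

lemma exp_Lop (τ : ℝ) :
    exp (τ • Lop B1 B2 B3) =
      Phi1 N T F (exp (τ • B1ᵀ)) * (Phi2 N T F (exp (τ • B2ᵀ)) *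
        Phi3 N T F (exp (τ • B3ᵀ))) := by
  have h12 : Commute (τ • Phi1 N T F B1ᵀ) (τ • Phi2 N T F B2ᵀ) :=
    ((commute12 B1ᵀ B2ᵀ).smul_left τ).smul_right τ
  have h13 : Commute (τ • Phi1 N T F B1ᵀ) (τ • Phi3 N T F B3ᵀ) :=
    ((commute13 B1ᵀ B3ᵀ).smul_left τ).smul_right τ
  have h23 : Commute (τ • Phi2 N T F B2ᵀ) (τ • Phi3 N T F B3ᵀ) :=
    ((commute23 B2ᵀ B3ᵀ).smul_left τ).smul_right τ
  have : τ • Lop B1 B2 B3 =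
      τ • Phi1 N T F B1ᵀ + (τ • Phi2 N T F B2ᵀ + τ • Phi3 N T F B3ᵀ) := by
    simp [Lop, smul_add, add_assoc]
  letI instQ : NormedAlgebra ℚ (Ten N T F →L[ℝ] Ten N T F) := .restrictScalars ℚ ℝ _
  rw [this, NormedSpace.exp_add_of_commute (h12.add_right h13), NormedSpace.exp_add_of_commute h23,
    exp_Phi1, exp_Phi2, exp_Phi3]

lemma exp_Lop_apply (H0 : Ten N T F) (τ : ℝ) :
    exp (τ • Lop B1 B2 B3) H0 = expTensor H0 B1 B2 B3 τ := by
  rw [exp_Lop]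
  have e1 : (exp (τ • B1ᵀ))ᵀ = exp (τ • B1) := by
    rw [← Matrix.transpose_smul, Matrix.exp_transpose, Matrix.transpose_transpose]
  have e2 : (exp (τ • B2ᵀ))ᵀ = exp (τ • B2) := by
    rw [← Matrix.transpose_smul, Matrix.exp_transpose, Matrix.transpose_transpose]
  have e3 : (exp (τ • B3ᵀ))ᵀ = exp (τ • B3) := by
    rw [← Matrix.transpose_smul, Matrix.exp_transpose, Matrix.transpose_transpose]
  show (Phi1 N T F (exp (τ • B1ᵀ)))
      ((Phi2 N T F (exp (τ • B2ᵀ))) ((Phi3 N T F (exp (τ • B3ᵀ))) H0)) = _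
  simp only [Phi1, Phi2, Phi3, AlgHom.coe_mk, RingHom.coe_mk, MonoidHom.coe_mk,
    OneHom.coe_mk, mode1_apply, mode2_apply, mode3_apply, e1, e2, e3]
  rw [expTensor, tmul23_comm, tmul13_comm, tmul12_comm]

end GraphODEAux

set_option synthInstance.maxHeartbeats 1000000
set_option maxHeartbeats 1000000
namespace GraphODEAux

open NormedSpace MeasureTheory

variable {N T F : ℕ} (B1 : Matrix (Fin N) (Fin N) ℝ) (B2 : Matrix (Fin T) (Fin T) ℝ)
  (B3 : Matrix (Fin F) (Fin F) ℝ) (H0 : Ten N T F)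

def Gfun (τ : ℝ) : Ten N T F := exp (τ • Lop B1 B2 B3) H0

lemma exp_mul_comm (τ : ℝ) :
    exp (τ • Lop B1 B2 B3) * Lop B1 B2 B3 =
      Lop B1 B2 B3 * exp (τ • Lop B1 B2 B3) :=
  (((Commute.refl (Lop B1 B2 B3)).smul_left τ).exp_left).eq

lemma Gfun_hasDerivAt (τ : ℝ) :
    HasDerivAt (Gfun B1 B2 B3 H0) (Lop B1 B2 B3 (Gfun B1 B2 B3 H0 τ)) τ := by
  have h1 : HasDerivAt (fun u : ℝ => exp (u • Lop B1 B2 B3))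
      (exp (τ • Lop B1 B2 B3) * Lop B1 B2 B3) τ := hasDerivAt_exp_smul_const (𝕂 := ℝ) (𝔸 := Ten N T F →L[ℝ] Ten N T F) _ τ
  have h2 := h1.clm_apply (hasDerivAt_const τ H0)
  simp only [map_zero, add_zero, exp_mul_comm, ContinuousLinearMap.mul_apply] at h2
  exact h2

lemma Gfun_continuous : Continuous (Gfun B1 B2 B3 H0) :=
  continuous_iff_continuousAt.2 fun τ => (Gfun_hasDerivAt B1 B2 B3 H0 τ).continuousAt

lemma Gfun_zero : Gfun B1 B2 B3 H0 0 = H0 := by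
  simp [Gfun, zero_smul, exp_zero]

def Rfun (t : ℝ) : Ten N T F :=
  Gfun B1 B2 B3 H0 t + ∫ s in (0:ℝ)..t, Gfun B1 B2 B3 H0 s

lemma Rfun_zero : Rfun B1 B2 B3 H0 0 = H0 := by
  simp [Rfun, Gfun_zero]

lemma Rfun_hasDerivAt (t : ℝ) :
    HasDerivAt (Rfun B1 B2 B3 H0) (Lop B1 B2 B3 (Rfun B1 B2 B3 H0 t) + H0) t := by
  have hGc := Gfun_continuous B1 B2 B3 H0
  have hint : IntervalIntegrable (Gfun B1 B2 B3 H0) volume 0 t :=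
    hGc.intervalIntegrable 0 t
  have h3 : HasDerivAt (fun u => ∫ s in (0:ℝ)..u, Gfun B1 B2 B3 H0 s)
      (Gfun B1 B2 B3 H0 t) t :=
    intervalIntegral.integral_hasDerivAt_right hint
      (hGc.stronglyMeasurableAtFilter _ _) hGc.continuousAt
  have h4 := (Gfun_hasDerivAt B1 B2 B3 H0 t).add h3
  have key : Lop B1 B2 B3 (Rfun B1 B2 B3 H0 t) + H0 =
      Lop B1 B2 B3 (Gfun B1 B2 B3 H0 t) + Gfun B1 B2 B3 H0 t := by
    have hLc : Continuous fun s => Lop B1 B2 B3 (Gfun B1 B2 B3 H0 s) :=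
      (Lop B1 B2 B3).continuous.comp hGc
    have hftc : (∫ s in (0:ℝ)..t, Lop B1 B2 B3 (Gfun B1 B2 B3 H0 s)) =
        Gfun B1 B2 B3 H0 t - H0 := by
      rw [intervalIntegral.integral_eq_sub_of_hasDerivAt
        (fun s _ => Gfun_hasDerivAt B1 B2 B3 H0 s) (hLc.intervalIntegrable 0 t),
        Gfun_zero]
    have : Lop B1 B2 B3 (∫ s in (0:ℝ)..t, Gfun B1 B2 B3 H0 s) =
        Gfun B1 B2 B3 H0 t - H0 := by
      rw [← (Lop B1 B2 B3).intervalIntegral_comp_comm hint, hftc]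
    rw [Rfun, map_add, this]
    abel
  rw [key]
  exact h4

end GraphODEAux


open GraphODEAux NormedSpace MeasureTheory in
/-- Any differentiable solution of the tensor ODE
`dH/dt = H ×₁ B₁ + H ×₂ B₂ + H ×₃ B₃ + H₀` with `H(0) = H₀` is given by the
analytic formula
`H(t) = H₀ ×₁ e^{tB₁} ×₂ e^{tB₂} ×₃ e^{tB₃}
  + ∫₀^t H₀ ×₁ e^{(t−s)B₁} ×₂ e^{(t−s)B₂} ×₃ e^{(t−s)B₃} ds`. -/
theorem graph_ode_solution_unique {N T F : ℕ}
    (H0 : Fin N → Fin T → Fin F → ℝ)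
    (B1 : Matrix (Fin N) (Fin N) ℝ) (B2 : Matrix (Fin T) (Fin T) ℝ)
    (B3 : Matrix (Fin F) (Fin F) ℝ)
    (H : ℝ → (Fin N → Fin T → Fin F → ℝ))
    (hODE : ∀ t : ℝ, HasDerivAt H
      (tmul1 (H t) B1 + tmul2 (H t) B2 + tmul3 (H t) B3 + H0) t)
    (hinit : H 0 = H0) :
    ∀ t : ℝ, H t = expTensor H0 B1 B2 B3 t +
      fun i j k => ∫ s in (0:ℝ)..t, expTensor H0 B1 B2 B3 (t - s) i j k := by
  intro t
  set L := Lop B1 B2 B3 with hL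
  -- the difference of the two solutions
  set D : ℝ → Ten N T F := fun u => H u - Rfun B1 B2 B3 H0 u with hD
  have hDd : ∀ u, HasDerivAt D (L (D u)) u := by
    intro u
    have h := (hODE u).sub (Rfun_hasDerivAt B1 B2 B3 H0 u)
    have : tmul1 (H u) B1 + tmul2 (H u) B2 + tmul3 (H u) B3 + H0 -
        (L (Rfun B1 B2 B3 H0 u) + H0) = L (D u) := by
      rw [hD, map_sub, hL]
      simp only [Lop_apply]
      abel
    rwa [this] at h
  -- integrating factor
  set Φ : ℝ → Ten N T F := fun u => exp ((-u) • L) (D u) with hΦ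
  have hΦd : ∀ u, HasDerivAt Φ 0 u := by
    intro u
    have h1 : HasDerivAt (fun v : ℝ => exp (v • L)) (exp ((-u) • L) * L) (-u) :=
      hasDerivAt_exp_smul_const (𝕂 := ℝ) (𝔸 := Ten N T F →L[ℝ] Ten N T F) _ _
    have h2 : HasDerivAt (fun v : ℝ => exp ((-v) • L))
        ((-1 : ℝ) • (exp ((-u) • L) * L)) u :=
      HasDerivAt.scomp u h1 (hasDerivAt_neg u)
    have h3 := h2.clm_apply (hDd u)
    have : ((-1 : ℝ) • (exp ((-u) • L) * L)) (D u) +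
        exp ((-u) • L) (L (D u)) = 0 := by
      simp [ContinuousLinearMap.mul_apply]
    rwa [this] at h3
  have hconst : ∀ u, Φ u = Φ 0 := fun u =>
    is_const_of_deriv_eq_zero (fun v => (hΦd v).differentiableAt)
      (fun v => (hΦd v).deriv) u 0
  have hΦ0 : Φ 0 = 0 := by
    simp [hΦ, hD, hinit, Rfun_zero, zero_smul, exp_zero]
  have hDzero : D t = 0 := by
    have h1 : exp ((-t) • L) (D t) = 0 := (hconst t).trans hΦ0
    have h2 : exp (t • L) (exp ((-t) • L) (D t)) = D t := by
      letI : NormedAlgebra ℚ (Ten N T F →L[ℝ] Ten N T F) := .restrictScalars ℚ ℝ _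
      rw [← ContinuousLinearMap.mul_apply, ← NormedSpace.exp_add_of_commute
        (((Commute.refl L).smul_left t).smul_right (-t))]
      have hz : t • L + -t • L = (0 : Ten N T F →L[ℝ] Ten N T F) := by
        rw [← add_smul]; simp
      rw [hz, exp_zero, ContinuousLinearMap.one_apply]
    rw [h1] at h2
    rw [← h2]
    simp
  have hHR : H t = Rfun B1 B2 B3 H0 t := by
    have := sub_eq_zero.mp hDzero
    exact this
  rw [hHR, Rfun]
  congr 1
  · exact exp_Lop_apply B1 B2 B3 H0 t
  · funext i j k
    have hGc := Gfun_continuous B1 B2 B3 H0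
    set π : Ten N T F →L[ℝ] ℝ :=
      (ContinuousLinearMap.proj k).comp ((ContinuousLinearMap.proj j).comp
        (ContinuousLinearMap.proj (R := ℝ) (φ := fun _ : Fin N => Fin T → Fin F → ℝ) i))
      with hπ
    have hint : IntervalIntegrable (Gfun B1 B2 B3 H0) volume 0 t :=
      hGc.intervalIntegrable 0 t
    have h1 : (∫ s in (0:ℝ)..t, Gfun B1 B2 B3 H0 s) i j k =
        ∫ s in (0:ℝ)..t, Gfun B1 B2 B3 H0 s i j k := by
      have := (π.intervalIntegral_comp_comm hint).symm
      simpa [hπ] using this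
    rw [h1]
    have h2 : ∀ s, expTensor H0 B1 B2 B3 s = Gfun B1 B2 B3 H0 s := fun s =>
      (exp_Lop_apply B1 B2 B3 H0 s).symm
    simp only [h2]
    have := intervalIntegral.integral_comp_sub_left
      (fun u => Gfun B1 B2 B3 H0 u i j k) t (a := 0) (b := t)
    simpa using this.symm
end
end
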